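/- Let G be a finite simple graph and A a critical independent set of G. Then A = ker(G) if and only if for each v ∈ A there exists a matching from N(A) into A \ {v}, i.e., an injective function f : N(A) → A \ {v} such that f(u) is adjacent to u for every u ∈ N(A). -/

import Mathlib

open Finset

namespace CritGraph

variable {V : Type*} [Fintype V] [DecidableEq V]

/-- The neighborhood of a set of vertices `X`:
all vertices having at least one neighbor in `X`. -/
def nbhd (G : SimpleGraph V) [DecidableRel G.Adj] (X : Finset V) : Finset V :=
  univ.filter fun v => ∃ x ∈ X, G.Adj v x

/-- The difference `d(X) = |X| - |N(X)|` of a set of vertices `X`. -/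
def diff (G : SimpleGraph V) [DecidableRel G.Adj] (X : Finset V) : ℤ :=
  (X.card : ℤ) - ((nbhd G X).card : ℤ)

/-- A set of vertices is independent if no two of its vertices are adjacent. -/
def IsIndep (G : SimpleGraph V) (S : Finset V) : Prop :=
  ∀ u ∈ S, ∀ v ∈ S, ¬ G.Adj u v

instance (G : SimpleGraph V) [DecidableRel G.Adj] : DecidablePred (IsIndep G) := fun S =>
  inferInstanceAs (Decidable (∀ u ∈ S, ∀ v ∈ S, ¬ G.Adj u v))

/-- The critical difference `d_c(G) = max {d(X) : X ⊆ V}`. -/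
def dC (G : SimpleGraph V) [DecidableRel G.Adj] : ℤ :=
  (univ : Finset V).powerset.sup' (Finset.powerset_nonempty _) (diff G)

/-- The critical independence difference `id_c(G) = max {d(I) : I independent}`. -/
def idC (G : SimpleGraph V) [DecidableRel G.Adj] : ℤ :=
  ((univ : Finset V).powerset.filter (IsIndep G)).sup'
    ⟨∅, by simp [IsIndep]⟩ (diff G)

/-- `A` is a critical independent set: `A` is independent and
`d(A) = max {d(I) : I independent}`. -/
def IsCritIndep (G : SimpleGraph V) [DecidableRel G.Adj] (A : Finset V) : Prop :=
  IsIndep G A ∧ ∀ I : Finset V, IsIndep G I → diff G I ≤ diff G A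

instance (G : SimpleGraph V) [DecidableRel G.Adj] : DecidablePred (IsCritIndep G) := fun A =>
  inferInstanceAs (Decidable (IsIndep G A ∧ ∀ I : Finset V, IsIndep G I → diff G I ≤ diff G A))

/-- `ker(G)`: the intersection of all critical independent sets of `G`. -/
def kerG (G : SimpleGraph V) [DecidableRel G.Adj] : Finset V :=
  univ.filter fun v => ∀ A : Finset V, IsCritIndep G A → v ∈ A

/-- `G - v`: the induced subgraph of `G` on `V \ {v}`. -/
def deleteVert (G : SimpleGraph V) (v : V) : SimpleGraph {u : V // u ≠ v} :=
  G.comap Subtype.val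

instance (G : SimpleGraph V) (v : V) [DecidableRel G.Adj] :
    DecidableRel (deleteVert G v).Adj := fun a b =>
  inferInstanceAs (Decidable (G.Adj a.val b.val))

/-- `S` is an inclusion-minimal independent set with positive difference. -/
def MinPosIndep (G : SimpleGraph V) [DecidableRel G.Adj] (S : Finset V) : Prop :=
  IsIndep G S ∧ 0 < diff G S ∧ ∀ S' ⊂ S, ¬ (IsIndep G S' ∧ 0 < diff G S')

/-- `S` is a maximum independent set. -/
def IsMaxIndep (G : SimpleGraph V) (S : Finset V) : Prop :=
  IsIndep G S ∧ ∀ I : Finset V, IsIndep G I → I.card ≤ S.card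

instance (G : SimpleGraph V) [DecidableRel G.Adj] : DecidablePred (IsMaxIndep G) := fun S =>
  inferInstanceAs (Decidable (IsIndep G S ∧ ∀ I : Finset V, IsIndep G I → I.card ≤ S.card))

/-- `core(G)`: the intersection of all maximum independent sets of `G`. -/
def coreG (G : SimpleGraph V) [DecidableRel G.Adj] : Finset V :=
  univ.filter fun v => ∀ A : Finset V, IsMaxIndep G A → v ∈ A



section Aux

variable (G : SimpleGraph V) [DecidableRel G.Adj]

lemma mem_nbhd {X : Finset V} {v : V} : v ∈ nbhd G X ↔ ∃ x ∈ X, G.Adj v x := by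
  simp [nbhd]

lemma nbhd_mono {X Y : Finset V} (h : X ⊆ Y) : nbhd G X ⊆ nbhd G Y := by
  intro w hw
  obtain ⟨x, hx, hadj⟩ := (mem_nbhd G).mp hw
  exact (mem_nbhd G).mpr ⟨x, h hx, hadj⟩

lemma nbhd_union (X Y : Finset V) : nbhd G (X ∪ Y) = nbhd G X ∪ nbhd G Y := by
  ext w
  simp only [mem_nbhd, mem_union]
  constructor
  · rintro ⟨x, hx | hx, hadj⟩
    · exact Or.inl ⟨x, hx, hadj⟩
    · exact Or.inr ⟨x, hx, hadj⟩
  · rintro (⟨x, hx, hadj⟩ | ⟨x, hx, hadj⟩)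
    · exact ⟨x, Or.inl hx, hadj⟩
    · exact ⟨x, Or.inr hx, hadj⟩

lemma crit_diff_eq {A B : Finset V} (hA : IsCritIndep G A) (hB : IsCritIndep G B) :
    diff G A = diff G B :=
  le_antisymm (hB.2 A hA.1) (hA.2 B hB.1)

/-- Key Hall-type inequality for `A = ker G`. -/
lemma hall_cond {A : Finset V} (hA : IsCritIndep G A) (hker : A = kerG G)
    {v : V} (hv : v ∈ A) {Y : Finset V} (hY : Y ⊆ nbhd G A) :
    Y.card ≤ ((A.filter (fun a => ∃ y ∈ Y, G.Adj a y)).erase v).card := by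
  classical
  set Z : Finset V := A.filter (fun a => ∃ y ∈ Y, G.Adj a y) with hZ
  have hZA : Z ⊆ A := filter_subset _ _
  set A' : Finset V := A \ Z with hA'
  have hA'indep : IsIndep G A' := fun u hu w hw =>
    hA.1 u (sdiff_subset hu) w (sdiff_subset hw)
  have hN : nbhd G A' ⊆ nbhd G A \ Y := by
    intro w hw
    obtain ⟨a, ha, hadj⟩ := (mem_nbhd G).mp hw
    have haA : a ∈ A := (mem_sdiff.mp ha).1
    refine mem_sdiff.mpr ⟨(mem_nbhd G).mpr ⟨a, haA, hadj⟩, fun hwY => ?_⟩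
    exact (mem_sdiff.mp ha).2 (mem_filter.mpr ⟨haA, w, hwY, hadj.symm⟩)
  have hcardA' : (A'.card : ℤ) = (A.card : ℤ) - Z.card := by
    rw [hA', card_sdiff_of_subset hZA]
    exact_mod_cast Nat.cast_sub (card_le_card hZA)
  have hcardN : ((nbhd G A').card : ℤ) ≤ ((nbhd G A).card : ℤ) - Y.card := by
    have h1 := card_le_card hN
    rw [card_sdiff_of_subset hY] at h1
    have h2 := card_le_card hY
    omega
  have hdle : diff G A' ≤ diff G A := hA.2 A' hA'indep
  have hZY : (Y.card : ℤ) ≤ Z.card := by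
    have : diff G A' = (A'.card : ℤ) - (nbhd G A').card := rfl
    have hdA : diff G A = (A.card : ℤ) - (nbhd G A).card := rfl
    rw [this, hdA, hcardA'] at hdle
    omega
  by_cases hvZ : v ∈ Z
  · -- strict inequality case
    have hstrict : (Y.card : ℤ) < Z.card := by
      rcases lt_or_eq_of_le hZY with h | h
      · exact h
      · exfalso
        have hdge : diff G A ≤ diff G A' := by
          have : diff G A' = (A'.card : ℤ) - (nbhd G A').card := rfl
          have hdA : diff G A = (A.card : ℤ) - (nbhd G A).card := rfl
          rw [this, hdA, hcardA']
          omega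
        have hA'crit : IsCritIndep G A' :=
          ⟨hA'indep, fun I hI => (hA.2 I hI).trans hdge⟩
        have hvk : v ∈ kerG G := hker ▸ hv
        have := (mem_filter.mp hvk).2 A' hA'crit
        exact (mem_sdiff.mp this).2 hvZ
    have := card_erase_of_mem hvZ
    omega
  · rw [erase_eq_of_notMem hvZ]
    exact_mod_cast hZY

/-- Forward direction: `A = ker G` gives matchings avoiding each vertex. -/
lemma exists_matching {A : Finset V} (hA : IsCritIndep G A) (hker : A = kerG G)
    {v : V} (hv : v ∈ A) :
    ∃ f : V → V, Set.InjOn f ↑(nbhd G A) ∧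
      ∀ u ∈ nbhd G A, f u ∈ A \ {v} ∧ G.Adj u (f u) := by
  classical
  set t : {x // x ∈ nbhd G A} → Finset V :=
    fun u => (A.erase v).filter (fun a => G.Adj u.1 a) with ht
  have hhall : ∀ s : Finset {x // x ∈ nbhd G A}, s.card ≤ (s.biUnion t).card := by
    intro s
    set Y : Finset V := s.image Subtype.val with hYdef
    have hYcard : Y.card = s.card := card_image_of_injective _ Subtype.val_injective
    have hYsub : Y ⊆ nbhd G A := by
      intro y hy
      obtain ⟨u, _, rfl⟩ := mem_image.mp hy
      exact u.2
    have hsub : ((A.filter (fun a => ∃ y ∈ Y, G.Adj a y)).erase v) ⊆ s.biUnion t := by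
      intro a ha
      have hane : a ≠ v := (mem_erase.mp ha).1
      obtain ⟨haA, y, hyY, hadj⟩ := mem_filter.mp (mem_erase.mp ha).2
      obtain ⟨u, hus, huy⟩ := mem_image.mp hyY
      refine mem_biUnion.mpr ⟨u, hus, ?_⟩
      rw [ht]
      exact mem_filter.mpr ⟨mem_erase.mpr ⟨hane, haA⟩, by rw [huy]; exact hadj.symm⟩
    calc s.card = Y.card := hYcard.symm
      _ ≤ _ := hall_cond G hA hker hv hYsub
      _ ≤ (s.biUnion t).card := card_le_card hsub
  obtain ⟨f₀, hf₀inj, hf₀mem⟩ :=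
    (Finset.all_card_le_biUnion_card_iff_exists_injective t).mp hhall
  refine ⟨fun x => if h : x ∈ nbhd G A then f₀ ⟨x, h⟩ else x, ?_, ?_⟩
  · intro x hx y hy hxy
    simp only [Finset.mem_coe] at hx hy
    simp only [dif_pos hx, dif_pos hy] at hxy
    exact Subtype.ext_iff.mp (hf₀inj hxy)
  · intro u hu
    simp only [dif_pos hu]
    have := hf₀mem ⟨u, hu⟩
    rw [ht] at this
    obtain ⟨hmem, hadj⟩ := mem_filter.mp this
    refine ⟨?_, hadj⟩
    rw [sdiff_singleton_eq_erase]
    exact hmem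

/-- Intersection of a critical independent set admitting a matching with
any critical independent set is critical. -/
lemma inter_critIndep {A B : Finset V} (hA : IsCritIndep G A) (hB : IsCritIndep G B)
    {f : V → V} (hinj : Set.InjOn f ↑(nbhd G A))
    (hf : ∀ u ∈ nbhd G A, f u ∈ A ∧ G.Adj u (f u)) :
    IsCritIndep G (A ∩ B) := by
  classical
  set B1 : Finset V := B ∩ nbhd G A with hB1
  set B2 : Finset V := B \ nbhd G A with hB2
  set C : Finset V := A ∩ B with hC
  set W : Finset V := A ∪ B2 with hW
  have hCindep : IsIndep G C := fun u hu w hw =>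
    hA.1 u (mem_inter.mp hu).1 w (mem_inter.mp hw).1
  have hB2nb : ∀ b ∈ B2, b ∉ nbhd G A := fun b hb => (mem_sdiff.mp hb).2
  have hWindep : IsIndep G W := by
    intro u hu w hw hadj
    rcases mem_union.mp hu with hu' | hu' <;> rcases mem_union.mp hw with hw' | hw'
    · exact hA.1 u hu' w hw' hadj
    · exact hB2nb w hw' ((mem_nbhd G).mpr ⟨u, hu', hadj.symm⟩)
    · exact hB2nb u hu' ((mem_nbhd G).mpr ⟨w, hw', hadj⟩)
    · exact hB.1 u (mem_sdiff.mp hu').1 w (mem_sdiff.mp hw').1 hadj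
  have hAB2 : A ∩ B2 = C := by
    ext x
    simp only [hB2, hC, mem_inter, mem_sdiff]
    constructor
    · rintro ⟨hxA, hxB, _⟩; exact ⟨hxA, hxB⟩
    · rintro ⟨hxA, hxB⟩
      refine ⟨hxA, hxB, fun hxn => ?_⟩
      obtain ⟨a, haA, hadj⟩ := (mem_nbhd G).mp hxn
      exact hA.1 x hxA a haA hadj
  have hCB2 : C ⊆ B2 := by
    intro x hx
    have : x ∈ A ∩ B2 := hAB2 ▸ hx
    exact (mem_inter.mp this).2
  have hcardW : (W.card : ℤ) + C.card = A.card + B2.card := by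
    have := card_union_add_card_inter A B2
    rw [hAB2] at this
    exact_mod_cast congrArg (Nat.cast : ℕ → ℤ) this
  have hnbW : nbhd G W = nbhd G A ∪ nbhd G B2 := nbhd_union G A B2
  have hnbC : nbhd G C ⊆ nbhd G A ∩ nbhd G B2 :=
    subset_inter (nbhd_mono G (inter_subset_left)) (nbhd_mono G hCB2)
  have hcardNW : ((nbhd G W).card : ℤ) + (nbhd G C).card ≤
      (nbhd G A).card + (nbhd G B2).card := by
    have h1 := card_union_add_card_inter (nbhd G A) (nbhd G B2)
    have h2 := card_le_card hnbC
    rw [← hnbW] at h1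
    omega
  -- the matching bound
  have himg : B1.image f ⊆ nbhd G B \ nbhd G B2 := by
    intro x hx
    obtain ⟨u, hu, rfl⟩ := mem_image.mp hx
    have huA : u ∈ nbhd G A := (mem_inter.mp hu).2
    obtain ⟨hfA, hadj⟩ := hf u huA
    refine mem_sdiff.mpr ⟨(mem_nbhd G).mpr ⟨u, (mem_inter.mp hu).1, hadj.symm⟩, fun hmem => ?_⟩
    obtain ⟨b, hbB2, hadjb⟩ := (mem_nbhd G).mp hmem
    exact hB2nb b hbB2 ((mem_nbhd G).mpr ⟨f u, hfA, hadjb.symm⟩)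
  have hB1card : (B1.card : ℤ) ≤ (nbhd G B).card - (nbhd G B2).card := by
    have hinj' : Set.InjOn f ↑B1 := hinj.mono (by
      intro x hx
      exact (mem_inter.mp hx).2)
    have h1 : (B1.image f).card = B1.card := card_image_of_injOn hinj'
    have h2 := card_le_card himg
    have h3 : nbhd G B2 ⊆ nbhd G B := nbhd_mono G sdiff_subset
    rw [card_sdiff_of_subset h3] at h2
    have h4 := card_le_card h3
    omega
  have hBsplit : (B1.card : ℤ) + B2.card = B.card := by
    exact_mod_cast congrArg (Nat.cast : ℕ → ℤ) (card_inter_add_card_sdiff B (nbhd G A))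
  have hdW : diff G W ≤ diff G A := hA.2 W hWindep
  have hdAB : diff G A = diff G B := crit_diff_eq G hA hB
  have hdC : diff G A ≤ diff G C := by
    have e1 : diff G W = (W.card : ℤ) - (nbhd G W).card := rfl
    have e2 : diff G C = (C.card : ℤ) - (nbhd G C).card := rfl
    have e3 : diff G A = (A.card : ℤ) - (nbhd G A).card := rfl
    have e4 : diff G B = (B.card : ℤ) - (nbhd G B).card := rfl
    rw [e1, e3] at hdW
    rw [e3, e4] at hdAB
    rw [e2, e3]
    omega
  exact ⟨hCindep, fun I hI => (hA.2 I hI).trans hdC⟩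

end Aux

/-- A critical independent set `A` equals `ker(G)` iff for each `v ∈ A` there is
a matching from `N(A)` into `A \ {v}`. -/
theorem eq_kerG_iff_matching_avoiding_each_vertex (G : SimpleGraph V) [DecidableRel G.Adj]
    (A : Finset V) (hA : IsCritIndep G A) :
    A = kerG G ↔
      ∀ v ∈ A, ∃ f : V → V, Set.InjOn f ↑(nbhd G A) ∧
        ∀ u ∈ nbhd G A, f u ∈ A \ {v} ∧ G.Adj u (f u) := by
  constructor
  · intro hker v hv
    exact exists_matching G hA hker hv
  · intro hmatch
    apply Finset.Subset.antisymm
    · -- A ⊆ kerG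
      intro v hv
      refine mem_filter.mpr ⟨mem_univ v, fun B hB => ?_⟩
      by_contra hvB
      obtain ⟨f, hinj, hf⟩ := hmatch v hv
      have hfA : ∀ u ∈ nbhd G A, f u ∈ A ∧ G.Adj u (f u) := fun u hu =>
        ⟨(mem_sdiff.mp (hf u hu).1).1, (hf u hu).2⟩
      set C : Finset V := A ∩ B with hC
      have hCcrit : IsCritIndep G C := inter_critIndep G hA hB hinj hfA
      have hCA : C ⊆ A := inter_subset_left
      have hNCA : nbhd G C ⊆ nbhd G A := nbhd_mono G hCA
      have hdeq : diff G A = diff G C := crit_diff_eq G hA hCcrit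
      have hvC : v ∉ C := fun h => hvB (mem_inter.mp h).2
      -- f maps nbhd A \ nbhd C injectively into (A \ C).erase v
      have himg : (nbhd G A \ nbhd G C).image f ⊆ (A \ C).erase v := by
        intro x hx
        obtain ⟨u, hu, rfl⟩ := mem_image.mp hx
        have huA : u ∈ nbhd G A := (mem_sdiff.mp hu).1
        have huC : u ∉ nbhd G C := (mem_sdiff.mp hu).2
        obtain ⟨hfm, hadj⟩ := hf u huA
        have hfuA : f u ∈ A := (mem_sdiff.mp hfm).1
        have hfune : f u ≠ v := by
          intro h
          exact (mem_sdiff.mp hfm).2 (by rw [h]; exact mem_singleton_self v)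
        have hfuC : f u ∉ C := fun h => huC ((mem_nbhd G).mpr ⟨f u, h, hadj⟩)
        exact mem_erase.mpr ⟨hfune, mem_sdiff.mpr ⟨hfuA, hfuC⟩⟩
      have hinj' : Set.InjOn f ↑(nbhd G A \ nbhd G C) := hinj.mono (by
        intro x hx
        exact (mem_sdiff.mp hx).1)
      have hcard1 : ((nbhd G A \ nbhd G C).image f).card =
          (nbhd G A \ nbhd G C).card := card_image_of_injOn hinj'
      have hcard2 := card_le_card himg
      have hvAC : v ∈ A \ C := mem_sdiff.mpr ⟨hv, hvC⟩
      have hcard3 : ((A \ C).erase v).card = (A \ C).card - 1 :=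
        card_erase_of_mem hvAC
      have hsd1 : (nbhd G A \ nbhd G C).card = (nbhd G A).card - (nbhd G C).card :=
        card_sdiff_of_subset hNCA
      have hsd2 : (A \ C).card = A.card - C.card := card_sdiff_of_subset hCA
      have hle1 := card_le_card hNCA
      have hle2 := card_le_card hCA
      have hpos : 0 < (A \ C).card := card_pos.mpr ⟨v, hvAC⟩
      have e3 : diff G A = (A.card : ℤ) - (nbhd G A).card := rfl
      have e4 : diff G C = (C.card : ℤ) - (nbhd G C).card := rfl
      rw [e3, e4] at hdeq
      omega
    · -- kerG ⊆ A
      intro v hv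
      exact (mem_filter.mp hv).2 A hA

end CritGraph
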